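/- For every w in the open upper half-plane ℍ, the imaginary part of the Cauchy transform of μ satisfies −π < Im C(w) < 0. -/

import Mathlib

open MeasureTheory Complex Filter Set

noncomputable section

/-- The support of a measure on `ℝ`: points all of whose neighbourhoods have
positive measure. -/
def msupport (μ : Measure ℝ) : Set ℝ := {x | ∀ U ∈ nhds x, μ U ≠ 0}

/-- The Cauchy transform `C(w) = ∫ (w - x)⁻¹ dμ(x)`. -/
def cauchy (μ : Measure ℝ) (w : ℂ) : ℂ := ∫ x, (w - (x : ℂ))⁻¹ ∂μ

/-- For every `w` in the open upper half-plane, `-π < Im C(w) < 0`. -/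
theorem im_cauchy_mem_Ioo (μ : Measure ℝ) (a b : ℝ) [IsProbabilityMeasure μ]
    (hle : μ ≤ volume) (hsupp : msupport μ ⊆ Set.Icc a b)
    (ha : a ∈ msupport μ) (hb : b ∈ msupport μ) (hab : 1 < b - a) :
    ∀ w : ℂ, 0 < w.im → -Real.pi < (cauchy μ w).im ∧ (cauchy μ w).im < 0 := by
  intro w hw
  set u := w.re with hu
  set v := w.im with hv
  have hv0 : v ≠ 0 := ne_of_gt hw
  set f : ℝ → ℝ := fun x => v / ((u - x) ^ 2 + v ^ 2) with hfdef
  have hden : ∀ x : ℝ, 0 < (u - x) ^ 2 + v ^ 2 := fun x => by positivity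
  have hfpos : ∀ x, 0 < f x := fun x => div_pos hw (hden x)
  have hne : ∀ x : ℝ, w - (x : ℂ) ≠ 0 := by
    intro x h
    have h2 : (w - (x : ℂ)).im = 0 := by rw [h]; simp
    simp only [Complex.sub_im, Complex.ofReal_im, sub_zero] at h2
    exact hv0 h2
  have hnormSq : ∀ x : ℝ, Complex.normSq (w - (x : ℂ)) = (u - x) ^ 2 + v ^ 2 := by
    intro x
    simp only [Complex.normSq_apply, Complex.sub_re, Complex.sub_im, Complex.ofReal_re,
      Complex.ofReal_im, sub_zero]
    ring
  have him : ∀ x : ℝ, ((w - (x : ℂ))⁻¹).im = -f x := by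
    intro x
    rw [Complex.inv_im, hnormSq x]
    simp only [Complex.sub_im, Complex.ofReal_im, sub_zero, hfdef, neg_div]
    rfl
  have hcont : Continuous fun x : ℝ => (w - (x : ℂ))⁻¹ :=
    (continuous_const.sub Complex.continuous_ofReal).inv₀ hne
  have hbound : ∀ x : ℝ, ‖(w - (x : ℂ))⁻¹‖ ≤ v⁻¹ := by
    intro x
    rw [norm_inv]
    have h1 : v ≤ ‖w - (x : ℂ)‖ := by
      have := Complex.abs_im_le_norm (w - (x : ℂ))
      rw [Complex.sub_im] at this
      simp only [Complex.ofReal_im, sub_zero] at this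
      calc v ≤ |v| := le_abs_self v
        _ ≤ ‖w - (x : ℂ)‖ := this
    exact inv_anti₀ hw h1
  have hint : Integrable (fun x : ℝ => (w - (x : ℂ))⁻¹) μ :=
    ⟨hcont.aestronglyMeasurable, HasFiniteIntegral.of_bounded (ae_of_all _ hbound)⟩
  have hIm : (cauchy μ w).im = ∫ x, ((w - (x : ℂ))⁻¹).im ∂μ :=
    (Complex.imCLM.integral_comp_comm hint).symm
  have hfint : Integrable f μ := by
    refine (hint.im.neg).congr (ae_of_all _ fun x => ?_)
    simp only [Pi.neg_apply, RCLike.im_eq_complex_im, him x, neg_neg]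
  have hIm' : (cauchy μ w).im = -∫ x, f x ∂μ := by
    rw [hIm, ← integral_neg]
    exact integral_congr_ae (ae_of_all _ fun x => him x)
  have hpos : 0 < ∫ x, f x ∂μ := by
    rw [integral_pos_iff_support_of_nonneg (fun x => (hfpos x).le) hfint]
    have hsup : Function.support f = Set.univ :=
      Set.eq_univ_of_forall fun x => (hfpos x).ne'
    rw [hsup]
    simp
  -- μ vanishes outside Icc a b
  have hμcompl : μ ((Set.Icc a b)ᶜ) = 0 := by
    have h1 : μ ((msupport μ)ᶜ) = 0 := by
      apply measure_null_of_locally_null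
      intro x hx
      simp only [msupport, Set.mem_compl_iff, Set.mem_setOf_eq, not_forall] at hx
      obtain ⟨U, hU, hU0⟩ := hx
      rw [not_not] at hU0
      exact ⟨U, nhdsWithin_le_nhds hU, hU0⟩
    exact measure_mono_null (Set.compl_subset_compl.mpr hsupp) h1
  have hrestrict : μ.restrict (Set.Icc a b) = μ :=
    Measure.restrict_eq_self_of_ae_mem (by
      rw [MeasureTheory.ae_iff]
      exact hμcompl)
  have hab' : a ≤ b := by linarith
  have hcontf : Continuous f := by
    apply continuous_const.div
    · fun_prop
    · exact fun x => (hden x).ne'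
  have hderiv : ∀ x ∈ Set.uIcc a b,
      HasDerivAt (fun y => Real.arctan ((y - u) / v)) (f x) x := by
    intro x _
    have h1 : HasDerivAt (fun y : ℝ => (y - u) / v) (1 / v) x := by
      simpa using ((hasDerivAt_id x).sub_const u).div_const v
    have h2 := (Real.hasDerivAt_arctan ((x - u) / v)).comp x h1
    refine h2.congr_deriv ?_
    have h3 : (0:ℝ) < 1 + ((x - u) / v) ^ 2 := by positivity
    simp only [hfdef]
    field_simp
    ring
  have hII : IntervalIntegrable f volume a b := hcontf.intervalIntegrable a b
  have hIval : ∫ x in a..b, f x =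
      Real.arctan ((b - u) / v) - Real.arctan ((a - u) / v) :=
    intervalIntegral.integral_eq_sub_of_hasDerivAt hderiv hII
  have hmono : ∫ x, f x ∂μ ≤ ∫ x in Set.Icc a b, f x := by
    conv_lhs => rw [← hrestrict]
    exact integral_mono_measure
      (Measure.restrict_mono' (Filter.EventuallyLE.refl _ _) hle)
      (ae_of_all _ fun x => (hfpos x).le)
      (hcontf.integrableOn_Icc)
  have hlt : ∫ x, f x ∂μ < Real.pi := by
    have h4 : ∫ x in Set.Icc a b, f x < Real.pi := by
      rw [MeasureTheory.integral_Icc_eq_integral_Ioc,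
        ← intervalIntegral.integral_of_le hab', hIval]
      have := Real.arctan_lt_pi_div_two ((b - u) / v)
      have := Real.neg_pi_div_two_lt_arctan ((a - u) / v)
      linarith
    linarith [hmono]
  constructor
  · rw [hIm']; linarith
  · rw [hIm']; linarith
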